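/- Let X be an absolutely continuous nonnegative random variable with finite mean, pdf f and cdf F with F(x) > 0 for all x > 0, and define the sequence F_1 = F, f_1 = f, T_n(x) = −log F_n(x), F_{n+1}(x) = F_n(x)(1 + T_n(x)), f_{n+1}(x) = T_n(x)·f_n(x). Then for every t > 0 and every n = 1, 2, …, the conditional covariance Cov[X_n, T_n(X_n) | X_n ≤ t] := E[(X_n − E(X_n))·(T_n(X_n) − E(T_n(X_n))) | X_n ≤ t], where E(T_n(X_n)) = 1, satisfies Cov[X_n, T_n(X_n) | X_n ≤ t] = T_n(t)·[μ_n(t) − E(X_n)] − CE(X_n; t), where μ_n(t) = E[X_n | X_n ≤ t] = (1/F_n(t))·∫_0^t x f_n(x) dx is the mean past lifetime and CE(X_n; t) = −∫_0^t (F_n(x)/F_n(t))·log(F_n(x)/F_n(t)) dx is the dynamic cumulative entropy. -/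

import Mathlib

open MeasureTheory Set Filter

private lemma sub_mul_log_le_one {s : ℝ} (hs : 0 < s) : s - s * Real.log s ≤ 1 := by
  have h := Real.log_le_sub_one_of_pos (show (0:ℝ) < 1/s by positivity)
  rw [Real.log_div one_ne_zero hs.ne', Real.log_one] at h
  have h2 : s * (0 - Real.log s) ≤ s * (1/s - 1) := mul_le_mul_of_nonneg_left h hs.le
  have h3 : s * (1/s - 1) = 1 - s := by field_simp
  nlinarith

private lemma hasDerivAt_sub_mul_log {G : ℝ → ℝ} {gx x : ℝ}
    (hG : HasDerivAt G gx x) (hx : G x ≠ 0) :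
    HasDerivAt (fun y => G y - G y * Real.log (G y)) (-Real.log (G x) * gx) x := by
  have hl : HasDerivAt (fun y => Real.log (G y)) ((G x)⁻¹ * gx) x := by
    exact (Real.hasDerivAt_log hx).comp x hG
  have h := hG.sub (hG.mul hl)
  exact h.congr_deriv (by rw [mul_inv_cancel_left₀ hx]; ring)

private lemma ftc_nonneg {Φ φ : ℝ → ℝ} {t : ℝ} (ht : 0 < t)
    (hc : ContinuousOn Φ (Icc 0 t))
    (hd : ∀ x ∈ Ioo (0:ℝ) t, HasDerivAt Φ (φ x) x)
    (hnn : ∀ x ∈ Ioo (0:ℝ) t, 0 ≤ φ x) :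
    IntervalIntegrable φ volume 0 t ∧ ∫ x in (0:ℝ)..t, φ x = Φ t - Φ 0 := by
  have hint : IntervalIntegrable φ volume 0 t := by
    apply intervalIntegral.intervalIntegrable_deriv_of_nonneg
    · rwa [Set.uIcc_of_le ht.le]
    · simpa [min_eq_left ht.le, max_eq_right ht.le] using hd
    · simpa [min_eq_left ht.le, max_eq_right ht.le] using hnn
  exact ⟨hint, intervalIntegral.integral_eq_sub_of_hasDerivAt_of_le ht.le hc hd hint⟩

private lemma core (G g : ℝ → ℝ) (t m : ℝ) (ht : 0 < t)
    (hGc : Continuous G) (hG0 : G 0 = 0)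
    (hGpos : ∀ x, 0 < x → 0 < G x) (hGle : ∀ x, 0 < x → G x ≤ 1)
    (hd : ∀ x, 0 < x → HasDerivAt G (g x) x)
    (hg0 : ∀ x, 0 < x → 0 ≤ g x) :
    (1 / G t) * (∫ x in (0:ℝ)..t, (x - m) * ((-Real.log (G x)) - 1) * g x)
      = (-Real.log (G t)) * ((1 / G t) * (∫ x in (0:ℝ)..t, x * g x) - m)
        - (-(∫ x in (0:ℝ)..t, (G x / G t) * Real.log (G x / G t))) := by
  have hGt : 0 < G t := hGpos t ht
  have hΦ2c : Continuous (fun x => G x - G x * Real.log (G x)) :=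
    hGc.sub (Real.continuous_mul_log.comp hGc)
  have hlognn : ∀ x ∈ Ioo (0:ℝ) t, 0 ≤ -Real.log (G x) := fun x hx =>
    neg_nonneg.2 (Real.log_nonpos (hGpos x hx.1).le (hGle x hx.1))
  have hΦ2nn : ∀ x ∈ Ioo (0:ℝ) t, 0 ≤ G x - G x * Real.log (G x) := by
    intro x hx
    nlinarith [mul_nonneg (hGpos x hx.1).le (hlognn x hx), hGpos x hx.1]
  -- FTC for G
  obtain ⟨ii_g, e_g⟩ := ftc_nonneg ht hGc.continuousOn
    (fun x hx => hd x hx.1) (fun x hx => hg0 x hx.1)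
  -- FTC for Φ2 = G - G log G
  obtain ⟨ii_Tg, e_Tg⟩ := ftc_nonneg ht hΦ2c.continuousOn
    (fun x hx => hasDerivAt_sub_mul_log (hd x hx.1) (hGpos x hx.1).ne')
    (fun x hx => mul_nonneg (hlognn x hx) (hg0 x hx.1))
  -- FTC for x * G x
  obtain ⟨ii_3, e_3⟩ := ftc_nonneg (Φ := fun y => y * G y)
    (φ := fun x => G x + x * g x) ht (continuous_id.mul hGc).continuousOn
    (fun x hx => ((hasDerivAt_id' (x := x)).mul (hd x hx.1)).congr_deriv (by ring))
    (fun x hx => add_nonneg (hGpos x hx.1).le (mul_nonneg hx.1.le (hg0 x hx.1)))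
  -- FTC for x * Φ2 x
  obtain ⟨ii_4, e_4⟩ := ftc_nonneg (Φ := fun y => y * (G y - G y * Real.log (G y)))
    (φ := fun x => (G x - G x * Real.log (G x)) + x * (-Real.log (G x) * g x)) ht
    (continuous_id.mul hΦ2c).continuousOn
    (fun x hx => by
      exact ((hasDerivAt_id' (x := x)).mul (hasDerivAt_sub_mul_log (hd x hx.1) (hGpos x hx.1).ne')).congr_deriv (by ring))
    (fun x hx => add_nonneg (hΦ2nn x hx)
      (mul_nonneg hx.1.le (mul_nonneg (hlognn x hx) (hg0 x hx.1))))
  have ii_G : IntervalIntegrable G volume 0 t := hGc.intervalIntegrable 0 t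
  have ii_GlogG : IntervalIntegrable (fun x => G x * Real.log (G x)) volume 0 t :=
    (Real.continuous_mul_log.comp hGc).intervalIntegrable 0 t
  have ii_Φ2 : IntervalIntegrable (fun x => G x - G x * Real.log (G x)) volume 0 t :=
    hΦ2c.intervalIntegrable 0 t
  have ii_xg : IntervalIntegrable (fun x => x * g x) volume 0 t := by
    have h := ii_3.sub ii_G
    simpa using h
  have ii_xTg : IntervalIntegrable (fun x => x * (-Real.log (G x) * g x)) volume 0 t := by
    have h := ii_4.sub ii_Φ2
    simpa using h
  set K := ∫ x in (0:ℝ)..t, G x with hK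
  set E := ∫ x in (0:ℝ)..t, G x * Real.log (G x) with hE
  -- value of ∫ Φ2
  have vΦ2 : ∫ x in (0:ℝ)..t, (G x - G x * Real.log (G x)) = K - E :=
    intervalIntegral.integral_sub ii_G ii_GlogG
  -- values of the four basic integrals
  have vg : ∫ x in (0:ℝ)..t, g x = G t := by rw [e_g, hG0, sub_zero]
  have vTg : ∫ x in (0:ℝ)..t, -Real.log (G x) * g x = G t - G t * Real.log (G t) := by
    rw [e_Tg, hG0]; simp
  have vB : ∫ x in (0:ℝ)..t, x * g x = t * G t - K := by
    have h := intervalIntegral.integral_add ii_G ii_xg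
    rw [e_3] at h
    simp only [zero_mul, sub_zero] at h
    linarith [h]
  have vA : ∫ x in (0:ℝ)..t, x * (-Real.log (G x) * g x)
      = t * (G t - G t * Real.log (G t)) - (K - E) := by
    have h := intervalIntegral.integral_add ii_Φ2 ii_xTg
    rw [e_4] at h
    simp only [zero_mul, sub_zero] at h
    rw [vΦ2] at h
    linarith [h]
  -- rewrite the entropy integral
  have hent : ∫ x in (0:ℝ)..t, (G x / G t) * Real.log (G x / G t)
      = (1 / G t) * E - (Real.log (G t) / G t) * K := by
    have heq : ∀ x ∈ Ioc (0:ℝ) t, (G x / G t) * Real.log (G x / G t)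
        = (1 / G t) * (G x * Real.log (G x)) - (Real.log (G t) / G t) * G x := by
      intro x hx
      rw [Real.log_div (hGpos x hx.1).ne' hGt.ne']
      field_simp
    calc ∫ x in (0:ℝ)..t, (G x / G t) * Real.log (G x / G t)
        = ∫ x in Ioc (0:ℝ) t, (G x / G t) * Real.log (G x / G t) :=
          intervalIntegral.integral_of_le ht.le
      _ = ∫ x in Ioc (0:ℝ) t,
            ((1 / G t) * (G x * Real.log (G x)) - (Real.log (G t) / G t) * G x) :=
          setIntegral_congr_fun measurableSet_Ioc heq
      _ = ∫ x in (0:ℝ)..t,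
            ((1 / G t) * (G x * Real.log (G x)) - (Real.log (G t) / G t) * G x) :=
          (intervalIntegral.integral_of_le ht.le).symm
      _ = (1 / G t) * E - (Real.log (G t) / G t) * K := by
          rw [intervalIntegral.integral_sub (ii_GlogG.const_mul _) (ii_G.const_mul _),
            intervalIntegral.integral_const_mul, intervalIntegral.integral_const_mul]
  -- expand the covariance integrand
  have hsplit : ∫ x in (0:ℝ)..t, (x - m) * ((-Real.log (G x)) - 1) * g x
      = (∫ x in (0:ℝ)..t, x * (-Real.log (G x) * g x)) - (∫ x in (0:ℝ)..t, x * g x)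
        - (m * ∫ x in (0:ℝ)..t, -Real.log (G x) * g x) + m * ∫ x in (0:ℝ)..t, g x := by
    have hfun : (fun x => (x - m) * ((-Real.log (G x)) - 1) * g x)
        = fun x => (x * (-Real.log (G x) * g x) - x * g x)
            - (m * (-Real.log (G x) * g x) - m * g x) := by
      funext x; ring
    rw [hfun, intervalIntegral.integral_sub (ii_xTg.sub ii_xg)
        ((ii_Tg.const_mul m).sub (ii_g.const_mul m)),
      intervalIntegral.integral_sub ii_xTg ii_xg,
      intervalIntegral.integral_sub (ii_Tg.const_mul m) (ii_g.const_mul m),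
      intervalIntegral.integral_const_mul, intervalIntegral.integral_const_mul]
    ring
  rw [hsplit, vA, vB, vTg, vg, hent]
  field_simp
  ring

/-- For every `t > 0` and `n ≥ 1`, the conditional covariance
`Cov[X_n, T_n(X_n) | X_n ≤ t] = E[(X_n - E(X_n))(T_n(X_n) - 1) | X_n ≤ t]`
(using `E(T_n(X_n)) = 1`) satisfies
`Cov[X_n, T_n(X_n) | X_n ≤ t] = T_n(t)(μ_n(t) - E(X_n)) - CE(X_n; t)`,
where `μ_n(t) = (1/F_n(t)) ∫_0^t x f_n(x) dx` and
`CE(X_n; t) = -∫_0^t (F_n(x)/F_n(t)) log (F_n(x)/F_n(t)) dx`. -/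
theorem seq_conditional_covariance
    (F f : ℝ → ℝ) (Fn fn : ℕ → ℝ → ℝ)
    (hFcont : Continuous F)
    (hderiv : ∀ x, 0 < x → HasDerivAt F (f x) x)
    (hf : ∀ x, 0 ≤ f x) (hfm : Measurable f)
    (hF0 : F 0 = 0)
    (hFmono : Monotone F)
    (hFpos : ∀ x, 0 < x → 0 < F x)
    (hFle : ∀ x, F x ≤ 1)
    (hF1 : ∀ x, Fn 1 x = F x)
    (hf1 : ∀ x, fn 1 x = f x)
    (hFrec : ∀ n, 1 ≤ n → ∀ x, Fn (n + 1) x = Fn n x * (1 + (-Real.log (Fn n x))))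
    (hfrec : ∀ n, 1 ≤ n → ∀ x, fn (n + 1) x = (-Real.log (Fn n x)) * fn n x)
    (hmean : ∀ n, 1 ≤ n → IntegrableOn (fun x => x * fn n x) (Ioi 0)) :
    ∀ t, 0 < t → ∀ n, 1 ≤ n →
      (1 / Fn n t) *
          (∫ x in (0:ℝ)..t,
            (x - ∫ y in Ioi 0, y * fn n y) * ((-Real.log (Fn n x)) - 1) * fn n x)
        = (-Real.log (Fn n t)) *
              ((1 / Fn n t) * (∫ x in (0:ℝ)..t, x * fn n x)
                - ∫ y in Ioi 0, y * fn n y)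
            - (-(∫ x in (0:ℝ)..t, (Fn n x / Fn n t) * Real.log (Fn n x / Fn n t))) := by
  have key : ∀ n, 1 ≤ n → Continuous (Fn n) ∧ Fn n 0 = 0
      ∧ (∀ x, 0 < x → 0 < Fn n x) ∧ (∀ x, 0 < x → Fn n x ≤ 1)
      ∧ (∀ x, 0 < x → HasDerivAt (Fn n) (fn n x) x) ∧ (∀ x, 0 < x → 0 ≤ fn n x) := by
    intro n hn
    induction n, hn using Nat.le_induction with
    | base =>
      have hFn : Fn 1 = F := funext hF1
      have hfn : fn 1 = f := funext hf1
      rw [hFn, hfn]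
      exact ⟨hFcont, hF0, hFpos, fun x _ => hFle x, hderiv, fun x _ => hf x⟩
    | succ n hn ih =>
      obtain ⟨hc, h0, hpos, hle, hdv, hnn⟩ := ih
      have hFfun : Fn (n+1) = fun x => Fn n x - Fn n x * Real.log (Fn n x) :=
        funext fun x => by rw [hFrec n hn x]; ring
      refine ⟨?_, ?_, ?_, ?_, ?_, ?_⟩
      · rw [hFfun]; exact hc.sub (Real.continuous_mul_log.comp hc)
      · rw [hFfun]; simp [h0]
      · intro x hx
        rw [hFfun]
        show 0 < Fn n x - Fn n x * Real.log (Fn n x)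
        have hl := Real.log_nonpos (hpos x hx).le (hle x hx)
        have := hpos x hx
        nlinarith [mul_nonneg (hpos x hx).le (neg_nonneg.2 hl)]
      · intro x hx
        rw [hFfun]
        show Fn n x - Fn n x * Real.log (Fn n x) ≤ 1
        exact sub_mul_log_le_one (hpos x hx)
      · intro x hx
        rw [hFfun, hfrec n hn x]
        exact hasDerivAt_sub_mul_log (hdv x hx) (hpos x hx).ne'
      · intro x hx
        rw [hfrec n hn x]
        exact mul_nonneg (neg_nonneg.2 (Real.log_nonpos (hpos x hx).le (hle x hx))) (hnn x hx)
  intro t ht n hn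
  obtain ⟨hc, h0, hpos, hle, hdv, hnn⟩ := key n hn
  exact core (Fn n) (fn n) t (∫ y in Ioi 0, y * fn n y) ht hc h0 hpos hle hdv hnn
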